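/- The number of planar rooted full n-ary increasingly labeled trees on k parent vertices equals the product ((n−1)(k−1)+1)·((n−1)(k−2)+1)···((n−1)·1+1)·n for k ≥ 1, and equals 1 for k = 0. -/

import Mathlib

/-- Planar rooted full `n`-ary trees: each vertex has either no children (a leaf)
or exactly `n` (ordered) children (a parent vertex). -/
inductive NTree (n : ℕ) : Type
  | leaf : NTree n
  | node : (Fin n → NTree n) → NTree n

/-- The number of parent (internal) vertices of a tree. -/
def NTree.internals {n : ℕ} : NTree n → ℕ
  | .leaf => 0
  | .node f => 1 + ∑ i, (f i).internals

/-- A position (path from the root) is an internal (parent) vertex of the tree. -/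
def NTree.isInternal {n : ℕ} : NTree n → List (Fin n) → Prop
  | .leaf, _ => False
  | .node _, [] => True
  | .node f, i :: p => (f i).isInternal p

/-- An element of `T(n,k)`: a planar rooted full `n`-ary tree with exactly `k` parent
vertices, whose parent vertices are labeled bijectively by `{1, …, k}` (here `Fin k`) with
labels strictly increasing along every branch from the root. -/
structure LabeledTree (n k : ℕ) where
  tree : NTree n
  internals_eq : tree.internals = k
  label : {p : List (Fin n) // tree.isInternal p} → Fin k
  bij : Function.Bijective label
  incr : ∀ p q : {p : List (Fin n) // tree.isInternal p},
    p.1 <+: q.1 → p.1 ≠ q.1 → label p < label q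

namespace NTree

variable {n : ℕ}

/-- A position is a leaf of the tree. -/
def isLeaf : NTree n → List (Fin n) → Prop
  | .leaf, [] => True
  | .leaf, _ :: _ => False
  | .node _, [] => False
  | .node f, i :: p => (f i).isLeaf p

/-- Subtree at a position. -/
def sub : NTree n → List (Fin n) → NTree n
  | t, [] => t
  | .leaf, _ :: _ => .leaf
  | .node f, i :: p => (f i).sub p

/-- Replace the subtree at a position by a single parent with all-leaf children. -/
def graft : NTree n → List (Fin n) → NTree n
  | _, [] => .node fun _ => .leaf
  | .leaf, _ :: _ => .leaf
  | .node f, i :: p => .node (Function.update f i ((f i).graft p))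

/-- Replace the subtree at a position by a leaf. -/
def prune : NTree n → List (Fin n) → NTree n
  | _, [] => .leaf
  | .leaf, _ :: _ => .leaf
  | .node f, i :: p => .node (Function.update f i ((f i).prune p))

@[simp] lemma isLeaf_leaf_nil : (leaf : NTree n).isLeaf [] := trivial
@[simp] lemma isLeaf_leaf_cons (i : Fin n) (p) : (leaf : NTree n).isLeaf (i :: p) ↔ False := Iff.rfl
@[simp] lemma isLeaf_node_nil (f : Fin n → NTree n) : (node f).isLeaf [] ↔ False := Iff.rfl
@[simp] lemma isLeaf_node_cons (f : Fin n → NTree n) (i : Fin n) (p) :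
    (node f).isLeaf (i :: p) ↔ (f i).isLeaf p := Iff.rfl
@[simp] lemma isInternal_leaf (p : List (Fin n)) : (leaf : NTree n).isInternal p ↔ False := Iff.rfl
@[simp] lemma isInternal_node_nil (f : Fin n → NTree n) : (node f).isInternal [] := trivial
@[simp] lemma isInternal_node_cons (f : Fin n → NTree n) (i : Fin n) (p) :
    (node f).isInternal (i :: p) ↔ (f i).isInternal p := Iff.rfl

lemma eq_leaf_of_isLeaf_nil {t : NTree n} (h : t.isLeaf []) : t = leaf := by
  cases t with
  | leaf => rfl
  | node f => exact absurd h (by simp)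

lemma isInternal_nil {t : NTree n} (h : t.isInternal []) : ∃ f, t = node f := by
  cases t with
  | leaf => exact absurd h (by simp)
  | node f => exact ⟨f, rfl⟩

lemma not_isInternal_of_isLeaf_prefix {t : NTree n} {p q : List (Fin n)}
    (hl : t.isLeaf p) (hpre : p <+: q) (hint : t.isInternal q) : False := by
  induction t generalizing p q with
  | leaf => exact hint
  | node f ih =>
    cases p with
    | nil => exact (by simpa using hl)
    | cons i p' =>
      obtain ⟨r, rfl⟩ := hpre
      exact ih i (by simpa using hl) ⟨r, rfl⟩ (by simpa using hint)

lemma not_isInternal_of_isLeaf {t : NTree n} {p : List (Fin n)} (hl : t.isLeaf p) :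
    ¬ t.isInternal p := fun h => not_isInternal_of_isLeaf_prefix hl (List.prefix_refl p) h

@[simp] lemma sub_nil (t : NTree n) : t.sub [] = t := by cases t <;> rfl
@[simp] lemma sub_node_cons (f : Fin n → NTree n) (i : Fin n) (p) :
    (node f).sub (i :: p) = (f i).sub p := rfl

lemma isInternal_append (t : NTree n) (p q : List (Fin n)) :
    t.isInternal (p ++ q) ↔ (t.sub p).isInternal q := by
  induction t generalizing p with
  | leaf =>
    cases p with
    | nil => simp [sub]
    | cons i p' => simp [sub]
  | node f ih =>
    cases p with
    | nil => simp [sub]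
    | cons i p' => simpa [sub] using ih i p'

lemma internals_graft {t : NTree n} {p : List (Fin n)} (hl : t.isLeaf p) :
    (t.graft p).internals = t.internals + 1 := by
  induction t generalizing p with
  | leaf =>
    cases p with
    | nil => simp [graft, internals]
    | cons i p' => exact absurd hl (by simp)
  | node f ih =>
    cases p with
    | nil => exact absurd hl (by simp)
    | cons i p' =>
      have hl' : (f i).isLeaf p' := by simpa using hl
      simp only [graft, internals]
      have hr : ∀ j, (Function.update f i ((f i).graft p') j).internals
          = Function.update (fun x => (f x).internals) i (((f i).graft p').internals) j :=
        fun j => (Function.apply_update (fun _ t => NTree.internals t) f i _ j)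
      rw [Finset.sum_congr rfl (fun j _ => hr j),
        Finset.sum_update_of_mem (Finset.mem_univ i)]
      rw [ih i hl']
      have hsplit := Finset.sum_eq_sum_sdiff_singleton_add (Finset.mem_univ i)
        (fun j => (f j).internals)
      omega

lemma isInternal_graft {t : NTree n} {p : List (Fin n)} (hl : t.isLeaf p) (q : List (Fin n)) :
    (t.graft p).isInternal q ↔ t.isInternal q ∨ q = p := by
  induction t generalizing p q with
  | leaf =>
    cases p with
    | nil =>
      simp only [graft, isInternal_leaf, false_or]
      cases q with
      | nil => simp
      | cons j q' =>
        simp only [isInternal_node_cons]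
        constructor
        · intro h; exact absurd h (by simp)
        · intro h; exact absurd h (by simp)
    | cons i p' => exact absurd hl (by simp)
  | node f ih =>
    cases p with
    | nil => exact absurd hl (by simp)
    | cons i p' =>
      have hl' : (f i).isLeaf p' := by simpa using hl
      cases q with
      | nil => simp [graft]
      | cons j q' =>
        simp only [graft, isInternal_node_cons]
        by_cases hji : j = i
        · subst hji
          rw [Function.update_self]
          rw [ih j hl']
          simp
        · rw [Function.update_of_ne hji]
          simp [hji]

lemma prune_graft {t : NTree n} {p : List (Fin n)} (hl : t.isLeaf p) :
    (t.graft p).prune p = t := by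
  induction t generalizing p with
  | leaf =>
    cases p with
    | nil => rfl
    | cons i p' => exact absurd hl (by simp)
  | node f ih =>
    cases p with
    | nil => exact absurd hl (by simp)
    | cons i p' =>
      have hl' : (f i).isLeaf p' := by simpa using hl
      simp only [graft, prune]
      congr 1
      funext j
      by_cases hji : j = i
      · subst hji
        simp only [Function.update_self]
        exact ih j hl'
      · simp only [Function.update_of_ne hji]

lemma isLeaf_prune {t : NTree n} {p : List (Fin n)} (hi : t.isInternal p) :
    (t.prune p).isLeaf p := by
  induction t generalizing p with
  | leaf => exact absurd hi (by simp)
  | node f ih =>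
    cases p with
    | nil => simp [prune]
    | cons i p' =>
      simp only [prune, isLeaf_node_cons, Function.update_self]
      exact ih i (by simpa using hi)

lemma graft_prune {t : NTree n} {p : List (Fin n)} (hi : t.isInternal p)
    (hsub : t.sub p = node fun _ => leaf) : (t.prune p).graft p = t := by
  induction t generalizing p with
  | leaf => exact absurd hi (by simp)
  | node f ih =>
    cases p with
    | nil => simpa [prune, graft] using hsub.symm
    | cons i p' =>
      simp only [prune, graft, Function.update_self]
      congr 1
      funext j
      by_cases hji : j = i
      · subst hji
        simp only [Function.update_self]
        exact ih j (by simpa using hi) (by simpa using hsub)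
      · simp only [Function.update_of_ne hji]

/-- Leaf positions of `leaf`. -/
def leafPosLeaf : {p : List (Fin n) // (leaf : NTree n).isLeaf p} ≃ Unit where
  toFun _ := ()
  invFun _ := ⟨[], trivial⟩
  left_inv p := by
    obtain ⟨p, hp⟩ := p
    cases p with
    | nil => rfl
    | cons i q => exact absurd hp (by simp)
  right_inv _ := rfl

/-- Leaf positions of `node f`. -/
def leafPosNode (f : Fin n → NTree n) :
    {p : List (Fin n) // (node f).isLeaf p} ≃ Σ i, {p : List (Fin n) // (f i).isLeaf p} where
  toFun p := match p with
    | ⟨[], hp⟩ => absurd hp (by simp)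
    | ⟨i :: q, hp⟩ => ⟨i, q, hp⟩
  invFun x := ⟨x.1 :: x.2.1, x.2.2⟩
  left_inv p := by
    obtain ⟨p, hp⟩ := p
    cases p with
    | nil => exact absurd hp (by simp)
    | cons i q => rfl
  right_inv x := rfl

lemma finite_leafPos (t : NTree n) : Finite {p : List (Fin n) // t.isLeaf p} := by
  induction t with
  | leaf => exact Finite.of_equiv _ leafPosLeaf.symm
  | node f ih =>
    haveI : ∀ i, Finite {p : List (Fin n) // (f i).isLeaf p} := ih
    exact Finite.of_equiv _ (leafPosNode f).symm

lemma card_leafPos (t : NTree n) :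
    (Nat.card {p : List (Fin n) // t.isLeaf p} : ℤ) = ((n : ℤ) - 1) * t.internals + 1 := by
  induction t with
  | leaf =>
    rw [Nat.card_congr leafPosLeaf]
    simp [internals]
  | node f ih =>
    haveI : ∀ i, Finite {p : List (Fin n) // (f i).isLeaf p} := fun i => finite_leafPos (f i)
    haveI : ∀ i, Fintype {p : List (Fin n) // (f i).isLeaf p} := fun i => Fintype.ofFinite _
    rw [Nat.card_congr (leafPosNode f), Nat.card_eq_fintype_card, Fintype.card_sigma]
    push_cast
    simp only [← Nat.card_eq_fintype_card]
    rw [Finset.sum_congr rfl (fun i _ => ih i), Finset.sum_add_distrib, ← Finset.mul_sum]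
    simp only [internals, Finset.sum_const, Finset.card_univ, Fintype.card_fin, nsmul_eq_mul,
      mul_one]
    push_cast
    ring

end NTree

namespace LabeledTree

open NTree

variable {n k : ℕ}

lemma ext' {a b : LabeledTree n k} (ht : a.tree = b.tree)
    (hl : ∀ (p : List (Fin n)) (ha : a.tree.isInternal p) (hb : b.tree.isInternal p),
      a.label ⟨p, ha⟩ = b.label ⟨p, hb⟩) : a = b := by
  obtain ⟨t, hi, l, hb, hinc⟩ := a
  obtain ⟨t', hi', l', hb', hinc'⟩ := b
  dsimp at ht
  subst ht
  have : l = l' := funext fun q => hl q.1 q.2 q.2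
  subst this
  rfl

/-- Attach a new top-labeled parent at leaf position `p`. -/
def push (t : LabeledTree n k) (p : {p : List (Fin n) // t.tree.isLeaf p}) :
    LabeledTree n (k + 1) where
  tree := t.tree.graft p.1
  internals_eq := by rw [internals_graft p.2, t.internals_eq]
  label q := if h : q.1 = p.1 then Fin.last k
    else Fin.castSucc (t.label ⟨q.1, ((isInternal_graft p.2 q.1).mp q.2).resolve_right h⟩)
  bij := by
    constructor
    · intro a b hab
      by_cases ha : a.1 = p.1 <;> by_cases hb : b.1 = p.1
      · exact Subtype.ext (ha.trans hb.symm)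
      · simp only [dif_pos ha, dif_neg hb] at hab
        exact absurd hab (Fin.castSucc_lt_last _).ne'
      · simp only [dif_neg ha, dif_pos hb] at hab
        exact absurd hab (Fin.castSucc_lt_last _).ne
      · simp only [dif_neg ha, dif_neg hb] at hab
        have h2 := t.bij.1 (Fin.castSucc_injective k hab)
        exact Subtype.ext (Subtype.mk_eq_mk.mp h2)
    · intro y
      by_cases hy : y = Fin.last k
      · exact ⟨⟨p.1, (isInternal_graft p.2 p.1).mpr (Or.inr rfl)⟩, by simp [hy]⟩
      · obtain ⟨y', rfl⟩ : ∃ y', Fin.castSucc y' = y := ⟨y.castPred hy, Fin.castSucc_castPred y hy⟩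
        obtain ⟨q, hq⟩ := t.bij.2 y'
        have hne : q.1 ≠ p.1 := fun h => not_isInternal_of_isLeaf p.2 (h ▸ q.2)
        refine ⟨⟨q.1, (isInternal_graft p.2 q.1).mpr (Or.inl q.2)⟩, ?_⟩
        simp only [dif_neg hne]
        exact congrArg Fin.castSucc hq
  incr := by
    intro a b hpre hne
    by_cases ha : a.1 = p.1
    · exfalso
      have hb' : b.1 ≠ p.1 := fun h => hne (ha.trans h.symm)
      have hbint : t.tree.isInternal b.1 := ((isInternal_graft p.2 b.1).mp b.2).resolve_right hb'
      have hpre' : p.1 <+: b.1 := by have hx := hpre; rwa [ha] at hx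
      exact not_isInternal_of_isLeaf_prefix p.2 hpre' hbint
    · by_cases hb : b.1 = p.1
      · simp only [dif_neg ha, dif_pos hb]
        exact Fin.castSucc_lt_last _
      · simp only [dif_neg ha, dif_neg hb]
        exact Fin.castSucc_lt_castSucc_iff.mpr (t.incr _ _ hpre hne)

lemma push_label (t : LabeledTree n k) (p : {p : List (Fin n) // t.tree.isLeaf p})
    (q : {q : List (Fin n) // (t.tree.graft p.1).isInternal q}) :
    (push t p).label q = if h : q.1 = p.1 then Fin.last k
      else Fin.castSucc (t.label ⟨q.1, ((isInternal_graft p.2 q.1).mp q.2).resolve_right h⟩) :=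
  rfl

/-- The internal position carrying the maximal label. -/
noncomputable def popP (u : LabeledTree n (k + 1)) : {p : List (Fin n) // u.tree.isInternal p} :=
  (u.bij.2 (Fin.last k)).choose

lemma popP_label (u : LabeledTree n (k + 1)) : u.label (popP u) = Fin.last k :=
  (u.bij.2 (Fin.last k)).choose_spec

lemma popP_max (u : LabeledTree n (k + 1)) (q : {p : List (Fin n) // u.tree.isInternal p})
    (h : (popP u).1 <+: q.1) : q.1 = (popP u).1 := by
  by_contra hne
  have := u.incr (popP u) q h (fun h' => hne h'.symm)
  rw [popP_label] at this
  exact absurd (Fin.le_last (u.label q)) (not_le.mpr this)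

lemma sub_popP (u : LabeledTree n (k + 1)) :
    u.tree.sub (popP u).1 = NTree.node fun _ => NTree.leaf := by
  have hsubint : (u.tree.sub (popP u).1).isInternal [] := by
    have h := (popP u).2
    rw [← List.append_nil (popP u).1] at h
    exact (isInternal_append u.tree (popP u).1 []).mp h
  obtain ⟨g, hg⟩ := isInternal_nil hsubint
  rw [hg]
  congr 1
  funext i
  cases hgi : g i with
  | leaf => rfl
  | node g' =>
    exfalso
    have hint : u.tree.isInternal ((popP u).1 ++ [i]) := by
      rw [isInternal_append, hg]
      simp [hgi]
    have := popP_max u ⟨_, hint⟩ ⟨[i], rfl⟩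
    simp at this

lemma isLeaf_prune_popP (u : LabeledTree n (k + 1)) :
    (u.tree.prune (popP u).1).isLeaf (popP u).1 := isLeaf_prune (popP u).2

lemma graft_prune_popP (u : LabeledTree n (k + 1)) :
    (u.tree.prune (popP u).1).graft (popP u).1 = u.tree :=
  graft_prune (popP u).2 (sub_popP u)

lemma isInternal_of_prune_popP (u : LabeledTree n (k + 1)) (q : List (Fin n))
    (h : (u.tree.prune (popP u).1).isInternal q) : u.tree.isInternal q := by
  have := (isInternal_graft (isLeaf_prune_popP u) q).mpr (Or.inl h)
  rwa [graft_prune_popP u] at this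

lemma label_ne_last (u : LabeledTree n (k + 1)) (q : List (Fin n))
    (h : (u.tree.prune (popP u).1).isInternal q) :
    u.label ⟨q, isInternal_of_prune_popP u q h⟩ ≠ Fin.last k := by
  intro hlast
  have heq : (⟨q, isInternal_of_prune_popP u q h⟩ : {p : List (Fin n) // u.tree.isInternal p})
      = popP u := u.bij.1 (hlast.trans (popP_label u).symm)
  have hq : q = (popP u).1 := congrArg Subtype.val heq
  exact not_isInternal_of_isLeaf (isLeaf_prune_popP u) (hq ▸ h)

/-- Remove the top-labeled parent. -/
noncomputable def popT (u : LabeledTree n (k + 1)) : LabeledTree n k where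
  tree := u.tree.prune (popP u).1
  internals_eq := by
    have h := internals_graft (isLeaf_prune_popP u)
    rw [graft_prune_popP u, u.internals_eq] at h
    omega
  label q := (u.label ⟨q.1, isInternal_of_prune_popP u q.1 q.2⟩).castPred (label_ne_last u q.1 q.2)
  bij := by
    constructor
    · intro a b hab
      have h1 := congrArg Fin.castSucc hab
      simp only [Fin.castSucc_castPred] at h1
      exact Subtype.ext (Subtype.mk_eq_mk.mp (u.bij.1 h1))
    · intro y
      obtain ⟨q, hq⟩ := u.bij.2 (Fin.castSucc y)
      have hqP : q.1 ≠ (popP u).1 := by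
        intro h
        rw [Subtype.ext h, popP_label] at hq
        exact (Fin.castSucc_lt_last y).ne hq.symm
      have hqT : (u.tree.prune (popP u).1).isInternal q.1 := by
        have h := (isInternal_graft (isLeaf_prune_popP u) q.1).mp
          (by rw [graft_prune_popP u]; exact q.2)
        exact h.resolve_right hqP
      refine ⟨⟨q.1, hqT⟩, ?_⟩
      apply Fin.castSucc_injective
      simp only [Fin.castSucc_castPred]
      exact hq
  incr := by
    intro a b hpre hne
    have h := u.incr ⟨a.1, isInternal_of_prune_popP u a.1 a.2⟩
      ⟨b.1, isInternal_of_prune_popP u b.1 b.2⟩ hpre hne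
    simp only [Fin.lt_def, Fin.coe_castPred]
    exact h

lemma popT_label (u : LabeledTree n (k + 1))
    (q : {q : List (Fin n) // (u.tree.prune (popP u).1).isInternal q}) :
    (popT u).label q
      = (u.label ⟨q.1, isInternal_of_prune_popP u q.1 q.2⟩).castPred (label_ne_last u q.1 q.2) :=
  rfl

lemma push_pop (u : LabeledTree n (k + 1)) :
    push (popT u) ⟨(popP u).1, isLeaf_prune_popP u⟩ = u := by
  apply ext' (graft_prune_popP u)
  intro q hq1 hq2
  refine (push_label _ _ _).trans ?_
  by_cases h : q = (popP u).1
  · rw [dif_pos h]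
    have h2 : (⟨q, hq2⟩ : {p : List (Fin n) // u.tree.isInternal p}) = popP u := Subtype.ext h
    rw [h2, popP_label]
  · rw [dif_neg h]
    have hq1' : (u.tree.prune (popP u).1).isInternal q :=
      ((isInternal_graft (isLeaf_prune_popP u) q).mp hq1).resolve_right h
    exact Fin.castSucc_castPred _ (label_ne_last u q hq1')

lemma pop_push (t : LabeledTree n k) (p : {p : List (Fin n) // t.tree.isLeaf p}) :
    (⟨popT (push t p), ⟨(popP (push t p)).1, isLeaf_prune_popP _⟩⟩ :
      Σ t : LabeledTree n k, {p : List (Fin n) // t.tree.isLeaf p}) = ⟨t, p⟩ := by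
  have hP : (popP (push t p)).1 = p.1 := by
    have h1 : (push t p).label ⟨p.1, (isInternal_graft p.2 p.1).mpr (Or.inr rfl)⟩
        = Fin.last k := by
      refine (push_label _ _ _).trans ?_
      rw [dif_pos rfl]
    have h2 := (push t p).bij.1 ((popP_label (push t p)).trans h1.symm)
    exact Subtype.mk_eq_mk.mp h2
  have ht : popT (push t p) = t := by
    apply ext'
    · show (push t p).tree.prune (popP (push t p)).1 = t.tree
      rw [hP]
      exact prune_graft p.2
    · intro q hq1 hq2
      refine (popT_label _ _).trans ?_
      have hqp : q ≠ p.1 := fun h => not_isInternal_of_isLeaf p.2 (h ▸ hq2)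
      have h3 : (push t p).label ⟨q, isInternal_of_prune_popP (push t p) q hq1⟩
          = Fin.castSucc (t.label ⟨q, hq2⟩) := by
        refine (push_label _ _ _).trans ?_
        rw [dif_neg hqp]
      simp_rw [h3, Fin.castPred_castSucc]
  have htree : (popT (push t p)).tree = t.tree := congrArg tree ht
  refine Sigma.ext ht ((Subtype.heq_iff_coe_eq ?_).mpr hP)
  intro x
  rw [htree]

lemma push_bijective :
    Function.Bijective (fun x : Σ t : LabeledTree n k, {p : List (Fin n) // t.tree.isLeaf p} =>
      push x.1 x.2) := by
  constructor
  · intro x y hxy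
    have hxy' : push x.1 x.2 = push y.1 y.2 := hxy
    have h1 := pop_push x.1 x.2
    have h2 := pop_push y.1 y.2
    rw [← Sigma.eta x, ← h1, ← Sigma.eta y, ← h2, hxy']
  · intro u
    exact ⟨⟨popT u, ⟨(popP u).1, isLeaf_prune_popP u⟩⟩, push_pop u⟩

/-- There is a unique labeled tree with no parents. -/
def zeroTree : LabeledTree n 0 where
  tree := NTree.leaf
  internals_eq := rfl
  label q := ((isInternal_leaf q.1).mp q.2).elim
  bij := ⟨fun a => ((isInternal_leaf a.1).mp a.2).elim, fun y => y.elim0⟩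
  incr a := ((isInternal_leaf a.1).mp a.2).elim

lemma eq_zeroTree (u : LabeledTree n 0) : u = zeroTree := by
  have ht : u.tree = NTree.leaf := by
    cases h : u.tree with
    | leaf => rfl
    | node f =>
      have := u.internals_eq
      rw [h] at this
      simp [NTree.internals] at this
  apply ext' ht
  intro p ha hb
  exact ((isInternal_leaf p).mp hb).elim

instance : Unique (LabeledTree n 0) := ⟨⟨zeroTree⟩, eq_zeroTree⟩

lemma finite (n k : ℕ) : Finite (LabeledTree n k) := by
  induction k with
  | zero => infer_instance
  | succ k ih =>
    haveI := ih
    haveI : ∀ t : LabeledTree n k, Finite {p : List (Fin n) // t.tree.isLeaf p} :=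
      fun t => finite_leafPos t.tree
    exact Finite.of_surjective _ push_bijective.2

lemma card_succ (n k : ℕ) : (Nat.card (LabeledTree n (k + 1)) : ℤ)
    = Nat.card (LabeledTree n k) * (((n : ℤ) - 1) * k + 1) := by
  haveI := finite n k
  haveI : ∀ t : LabeledTree n k, Finite {p : List (Fin n) // t.tree.isLeaf p} :=
    fun t => finite_leafPos t.tree
  haveI := Fintype.ofFinite (LabeledTree n k)
  haveI : ∀ t : LabeledTree n k, Fintype {p : List (Fin n) // t.tree.isLeaf p} :=
    fun t => Fintype.ofFinite _
  rw [← Nat.card_eq_of_bijective _ push_bijective, Nat.card_eq_fintype_card,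
    Fintype.card_sigma]
  push_cast
  simp only [← Nat.card_eq_fintype_card]
  rw [Finset.sum_congr rfl (fun t _ => by rw [card_leafPos t.tree, t.internals_eq])]
  rw [Finset.sum_const, Finset.card_univ, nsmul_eq_mul, ← Nat.card_eq_fintype_card]

lemma card_eq (n k : ℕ) : (Nat.card (LabeledTree n k) : ℤ)
    = ∏ j ∈ Finset.range k, (((n : ℤ) - 1) * j + 1) := by
  induction k with
  | zero => simp
  | succ k ih =>
    rw [card_succ, ih, Finset.prod_range_succ]

end LabeledTree

theorem stmt8 (n k : ℕ) :
    (1 ≤ k → (Nat.card (LabeledTree n k) : ℤ)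
      = ∏ j ∈ Finset.range k, (((n : ℤ) - 1) * j + 1)) ∧
    Nat.card (LabeledTree n 0) = 1 := by
  exact ⟨fun _ => LabeledTree.card_eq n k, by simp⟩
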